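/- Let ρ₀ = ½|011⟩⟨011| + ½|100⟩⟨100| and let ρ' = U_AC ρ₀ U_AC† be the instrumental state obtained by applying only U_AC = exp(−(iπ/4)·X⊗I₂⊗X), so that ρ' = ½|χ₁⟩⟨χ₁| + ½|χ₂⟩⟨χ₂| with χ₁ = (|011⟩ − i|110⟩)/√2 and χ₂ = (|100⟩ − i|001⟩)/√2. Then ρ' has nonzero quantum discord D_{AB|C}: for every rank-one orthogonal projector P on ℂ², (I₄⊗P)ρ'(I₄⊗P) + (I₄⊗(I₂−P))ρ'(I₄⊗(I₂−P)) ≠ ρ'. -/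

import Mathlib

/-!
STATEMENT 4: With `ρ₀ = ½|011⟩⟨011| + ½|100⟩⟨100|` and the instrumental state
`ρ' = U_AC ρ₀ U_AC†`, `U_AC = exp(−(iπ/4)·X⊗I₂⊗X)`, one has
`ρ' = ½|χ₁⟩⟨χ₁| + ½|χ₂⟩⟨χ₂|` with `χ₁ = (|011⟩−i|110⟩)/√2`, `χ₂ = (|100⟩−i|001⟩)/√2`,
and `ρ'` has nonzero quantum discord `D_{AB|C}`: no rank-one orthogonal projector `P`
on ℂ² satisfies `(I₄⊗P)ρ'(I₄⊗P) + (I₄⊗(I₂−P))ρ'(I₄⊗(I₂−P)) = ρ'`.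
-/

open Matrix
open scoped Kronecker

noncomputable section
set_option maxHeartbeats 1000000

/-- The Pauli-x matrix. -/
def X : Matrix (Fin 2) (Fin 2) ℂ := !![0, 1; 1, 0]

/-- The 2×2 identity matrix. -/
def Id2 : Matrix (Fin 2) (Fin 2) ℂ := 1

/-- `H_AC = X ⊗ I₂ ⊗ X` (tensor factors ordered A, B, C). -/
def HAC : Matrix (Fin 2 × Fin 2 × Fin 2) (Fin 2 × Fin 2 × Fin 2) ℂ := X ⊗ₖ (Id2 ⊗ₖ X)

/-- Standard basis vector `|0⟩` of ℂ². -/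
def ket0 : Fin 2 → ℂ := ![1, 0]

/-- Standard basis vector `|1⟩` of ℂ². -/
def ket1 : Fin 2 → ℂ := ![0, 1]

/-- `|abc⟩ = |a⟩⊗|b⟩⊗|c⟩ ∈ ℂ⁸` (Kronecker product of vectors). -/
def kron3 (u v w : Fin 2 → ℂ) : Fin 2 × Fin 2 × Fin 2 → ℂ :=
  fun p => u p.1 * v p.2.1 * w p.2.2

/-- The outer product (projector) `|v⟩⟨v|`. -/
def outer {n : Type*} (v : n → ℂ) : Matrix n n ℂ := vecMulVec v (star v)

/-- `ρ₀ = ½|011⟩⟨011| + ½|100⟩⟨100|`. -/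
def rho0 : Matrix (Fin 2 × Fin 2 × Fin 2) (Fin 2 × Fin 2 × Fin 2) ℂ :=
  (1 / 2 : ℂ) • outer (kron3 ket0 ket1 ket1) + (1 / 2 : ℂ) • outer (kron3 ket1 ket0 ket0)

/-- `U_AC = exp(−(iπ/4)·X⊗I₂⊗X)`. -/
def UAC : Matrix (Fin 2 × Fin 2 × Fin 2) (Fin 2 × Fin 2 × Fin 2) ℂ :=
  NormedSpace.exp ((-(Complex.I * ((Real.pi : ℂ) / 4))) • HAC)

/-- The instrumental state `ρ' = U_AC ρ₀ U_AC†`. -/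
def rhoPrime : Matrix (Fin 2 × Fin 2 × Fin 2) (Fin 2 × Fin 2 × Fin 2) ℂ :=
  UAC * rho0 * UACᴴ

/-- `χ₁ = (|011⟩ − i|110⟩)/√2`. -/
def chi1 : Fin 2 × Fin 2 × Fin 2 → ℂ :=
  ((Real.sqrt 2 : ℂ))⁻¹ • (kron3 ket0 ket1 ket1 - Complex.I • kron3 ket1 ket1 ket0)

/-- `χ₂ = (|100⟩ − i|001⟩)/√2`. -/
def chi2 : Fin 2 × Fin 2 × Fin 2 → ℂ :=
  ((Real.sqrt 2 : ℂ))⁻¹ • (kron3 ket1 ket0 ket0 - Complex.I • kron3 ket0 ket0 ket1)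

/-- `I₄ ⊗ P`: the operator acting as `P` on subsystem C and trivially on A, B. -/
def embedC (P : Matrix (Fin 2) (Fin 2) ℂ) :
    Matrix (Fin 2 × Fin 2 × Fin 2) (Fin 2 × Fin 2 × Fin 2) ℂ :=
  Id2 ⊗ₖ (Id2 ⊗ₖ P)

/-- The state after a von Neumann measurement `{P, I₂ − P}` on subsystem C. -/
def measC (P : Matrix (Fin 2) (Fin 2) ℂ)
    (ρ : Matrix (Fin 2 × Fin 2 × Fin 2) (Fin 2 × Fin 2 × Fin 2) ℂ) :
    Matrix (Fin 2 × Fin 2 × Fin 2) (Fin 2 × Fin 2 × Fin 2) ℂ :=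
  embedC P * ρ * embedC P + embedC (Id2 - P) * ρ * embedC (Id2 - P)


/-! ### Auxiliary definitions and lemmas -/

/-- Hadamard-type matrix used to diagonalize `X`. -/
def Had : Matrix (Fin 2) (Fin 2) ℂ := !![1, 1; 1, -1]

/-- `Had ⊗ I₂ ⊗ Had`, which diagonalizes `HAC`. -/
def Um : Matrix (Fin 2 × Fin 2 × Fin 2) (Fin 2 × Fin 2 × Fin 2) ℂ := Had ⊗ₖ (Id2 ⊗ₖ Had)

/-- Eigenvalues of `HAC` in the `Um` basis. -/
def dvec : Fin 2 × Fin 2 × Fin 2 → ℂ := fun p => if p.1 = p.2.2 then 1 else -1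

def alphaC : ℂ := ((Real.sqrt 2 : ℂ))⁻¹

lemma Um_mul_Um : Um * ((1/4 : ℂ) • Um) = 1 := by
  ext ⟨a, b, c⟩ ⟨a', b', c'⟩
  simp only [Matrix.mul_apply, Matrix.smul_apply, Um, Had, Id2, Matrix.kroneckerMap_apply,
    Matrix.one_apply, Fintype.sum_prod_type, Fin.sum_univ_two, Prod.mk.injEq]
  fin_cases a <;> fin_cases b <;> fin_cases c <;> fin_cases a' <;> fin_cases b' <;> fin_cases c' <;>
    norm_num [Matrix.cons_val_zero, Matrix.cons_val_one, Matrix.head_cons, Fin.isValue]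

lemma Um_mul_Um' : ((1/4 : ℂ) • Um) * Um = 1 := by
  ext ⟨a, b, c⟩ ⟨a', b', c'⟩
  simp only [Matrix.mul_apply, Matrix.smul_apply, Um, Had, Id2, Matrix.kroneckerMap_apply,
    Matrix.one_apply, Fintype.sum_prod_type, Fin.sum_univ_two, Prod.mk.injEq]
  fin_cases a <;> fin_cases b <;> fin_cases c <;> fin_cases a' <;> fin_cases b' <;> fin_cases c' <;>
    norm_num [Matrix.cons_val_zero, Matrix.cons_val_one, Matrix.head_cons, Fin.isValue]

lemma Um_inv : Um⁻¹ = (1/4 : ℂ) • Um := Matrix.inv_eq_right_inv Um_mul_Um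

lemma Um_unit : IsUnit Um := ⟨⟨Um, (1/4 : ℂ) • Um, Um_mul_Um, Um_mul_Um'⟩, rfl⟩

lemma conj_diag : Um * Matrix.diagonal dvec * Um⁻¹ = HAC := by
  rw [Um_inv]
  have h : Um * Matrix.diagonal dvec =
      Matrix.of (fun i j => Um i j * dvec j) := by
    ext i j; rw [Matrix.mul_diagonal]; rfl
  rw [h]
  ext ⟨a, b, c⟩ ⟨a', b', c'⟩
  simp only [Matrix.mul_apply, Matrix.smul_apply, Matrix.of_apply, Um, Had, Id2, HAC, X, dvec,
    Matrix.kroneckerMap_apply, Matrix.one_apply, Fintype.sum_prod_type, Fin.sum_univ_two,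
    Prod.mk.injEq]
  fin_cases a <;> fin_cases b <;> fin_cases c <;> fin_cases a' <;> fin_cases b' <;> fin_cases c' <;>
    norm_num [Matrix.cons_val_zero, Matrix.cons_val_one, Matrix.head_cons, Fin.isValue]

lemma sqrt2_ne : (Real.sqrt 2 : ℂ) ≠ 0 :=
  Complex.ofReal_ne_zero.mpr (by positivity)

lemma sqrt2_sq : (Real.sqrt 2 : ℂ) * (Real.sqrt 2 : ℂ) = 2 := by
  rw [← Complex.ofReal_mul, Real.mul_self_sqrt (by norm_num)]
  norm_num

lemma exp_c0 : Complex.exp (-(Complex.I * ((Real.pi : ℂ) / 4))) = alphaC - Complex.I * alphaC := by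
  rw [show -(Complex.I * ((Real.pi : ℂ) / 4)) = ((-(Real.pi / 4) : ℝ) : ℂ) * Complex.I by
    push_cast; ring]
  rw [Complex.exp_mul_I, ← Complex.ofReal_cos, ← Complex.ofReal_sin]
  rw [Real.cos_neg, Real.sin_neg, Real.cos_pi_div_four, Real.sin_pi_div_four]
  have h := sqrt2_sq
  have hne := sqrt2_ne
  push_cast
  field_simp [alphaC]
  ring_nf
  have ha : alphaC * 2 = (Real.sqrt 2 : ℂ) := by
    unfold alphaC; rw [← h]; exact inv_mul_cancel_left₀ hne _
  linear_combination (Complex.I - 1) * ha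

lemma exp_c0' : Complex.exp (-(-(Complex.I * ((Real.pi : ℂ) / 4)))) = alphaC + Complex.I * alphaC := by
  rw [show -(-(Complex.I * ((Real.pi : ℂ) / 4))) = (((Real.pi / 4) : ℝ) : ℂ) * Complex.I by
    push_cast; ring]
  rw [Complex.exp_mul_I, ← Complex.ofReal_cos, ← Complex.ofReal_sin]
  rw [Real.cos_pi_div_four, Real.sin_pi_div_four]
  have h := sqrt2_sq
  have hne := sqrt2_ne
  push_cast
  field_simp [alphaC]
  ring_nf
  have ha : alphaC * 2 = (Real.sqrt 2 : ℂ) := by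
    unfold alphaC; rw [← h]; exact inv_mul_cancel_left₀ hne _
  linear_combination (-(1 + Complex.I)) * ha

lemma UAC_eq : UAC = alphaC • (1 : Matrix (Fin 2 × Fin 2 × Fin 2) (Fin 2 × Fin 2 × Fin 2) ℂ)
    + (-(Complex.I * alphaC)) • HAC := by
  set c0 : ℂ := -(Complex.I * ((Real.pi : ℂ) / 4)) with hc0
  have h1 : c0 • HAC = Um * Matrix.diagonal (fun p => c0 * dvec p) * Um⁻¹ := by
    rw [show Matrix.diagonal (fun p => c0 * dvec p) = c0 • Matrix.diagonal dvec by
      rw [← Matrix.diagonal_smul]; rfl]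
    rw [Matrix.mul_smul, Matrix.smul_mul, conj_diag]
  have h2 : UAC = Um * Matrix.diagonal (fun p => Complex.exp (c0 * dvec p)) * Um⁻¹ := by
    rw [UAC, ← hc0, h1, Matrix.exp_conj _ _ Um_unit, Matrix.exp_diagonal]
    congr 1
    congr 1
    rw [Pi.exp_def]
    funext p
    rw [← Complex.exp_eq_exp_ℂ]
  have h3 : Matrix.diagonal (fun p => Complex.exp (c0 * dvec p)) =
      alphaC • (1 : Matrix (Fin 2 × Fin 2 × Fin 2) (Fin 2 × Fin 2 × Fin 2) ℂ)
      + (-(Complex.I * alphaC)) • Matrix.diagonal dvec := by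
    ext i j
    by_cases hij : i = j
    · subst hij
      simp only [Matrix.diagonal_apply_eq, Matrix.add_apply, Matrix.smul_apply,
        Matrix.one_apply_eq, dvec]
      by_cases h : i.1 = i.2.2
      · have := exp_c0
        rw [← hc0] at this
        simp only [h, if_true, eq_self_iff_true, if_pos rfl, mul_one, smul_eq_mul]
        norm_num [this]; ring
      · have := exp_c0'
        rw [← hc0] at this
        rw [if_neg h]
        simp only [smul_eq_mul, mul_neg_one, mul_one]
        norm_num [show c0 * -1 = -c0 by ring, this]
    · simp [Matrix.diagonal_apply_ne _ hij, Matrix.one_apply_ne hij]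
  have e1 : Um * (alphaC • (1 : Matrix (Fin 2 × Fin 2 × Fin 2) (Fin 2 × Fin 2 × Fin 2) ℂ)) * Um⁻¹
      = alphaC • 1 := by
    rw [Matrix.mul_smul, Matrix.mul_one, Matrix.smul_mul, Um_inv, Um_mul_Um]
  have e2 : Um * ((-(Complex.I * alphaC)) • Matrix.diagonal dvec) * Um⁻¹
      = (-(Complex.I * alphaC)) • HAC := by
    rw [Matrix.mul_smul, Matrix.smul_mul, conj_diag]
  rw [h2, h3, Matrix.mul_add, Matrix.add_mul, e1, e2]

lemma outer_mulVec {n : Type*} [Fintype n] (M : Matrix n n ℂ) (v : n → ℂ) :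
    outer (M.mulVec v) = M * outer v * Mᴴ := by
  ext i j
  simp only [outer, vecMulVec_apply, Matrix.mul_apply, Matrix.conjTranspose_apply,
    Matrix.mulVec, dotProduct, Pi.star_apply, star_sum, star_mul', Finset.sum_mul,
    Finset.mul_sum]
  refine Finset.sum_congr rfl fun l _ => Finset.sum_congr rfl fun k _ => by ring

lemma HACmulVec1 : HAC.mulVec (kron3 ket0 ket1 ket1) = kron3 ket1 ket1 ket0 := by
  funext ⟨a, b, c⟩
  simp only [Matrix.mulVec, dotProduct, HAC, X, Id2, Matrix.kroneckerMap_apply, kron3, ket0, ket1,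
    Matrix.one_apply, Fintype.sum_prod_type, Fin.sum_univ_two, Prod.mk.injEq]
  fin_cases a <;> fin_cases b <;> fin_cases c <;> norm_num

lemma HACmulVec2 : HAC.mulVec (kron3 ket1 ket0 ket0) = kron3 ket0 ket0 ket1 := by
  funext ⟨a, b, c⟩
  simp only [Matrix.mulVec, dotProduct, HAC, X, Id2, Matrix.kroneckerMap_apply, kron3, ket0, ket1,
    Matrix.one_apply, Fintype.sum_prod_type, Fin.sum_univ_two, Prod.mk.injEq]
  fin_cases a <;> fin_cases b <;> fin_cases c <;> norm_num

lemma UACchi1 : UAC.mulVec (kron3 ket0 ket1 ket1) = chi1 := by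
  rw [UAC_eq, Matrix.add_mulVec, Matrix.smul_mulVec, Matrix.smul_mulVec,
    Matrix.one_mulVec, HACmulVec1]
  funext p
  simp only [chi1, alphaC, Pi.add_apply, Pi.smul_apply, Pi.sub_apply, smul_eq_mul]
  ring

lemma UACchi2 : UAC.mulVec (kron3 ket1 ket0 ket0) = chi2 := by
  rw [UAC_eq, Matrix.add_mulVec, Matrix.smul_mulVec, Matrix.smul_mulVec,
    Matrix.one_mulVec, HACmulVec2]
  funext p
  simp only [chi2, alphaC, Pi.add_apply, Pi.smul_apply, Pi.sub_apply, smul_eq_mul]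
  ring

lemma part1 : rhoPrime = (1 / 2 : ℂ) • outer chi1 + (1 / 2 : ℂ) • outer chi2 := by
  rw [rhoPrime, rho0, ← UACchi1, ← UACchi2, outer_mulVec, outer_mulVec]
  rw [Matrix.mul_add, Matrix.add_mul, Matrix.mul_smul, Matrix.mul_smul,
    Matrix.smul_mul, Matrix.smul_mul]

def cv1 : Fin 2 × Fin 2 × Fin 2 → ℂ :=
  fun p => if p = (0,1,1) then 1 else if p = (1,1,0) then -Complex.I else 0
def cv2 : Fin 2 × Fin 2 × Fin 2 → ℂ :=
  fun p => if p = (1,0,0) then 1 else if p = (0,0,1) then -Complex.I else 0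

lemma chi1_eq : chi1 = alphaC • cv1 := by
  funext ⟨a, b, c⟩
  fin_cases a <;> fin_cases b <;> fin_cases c <;>
    simp [chi1, cv1, alphaC, kron3, ket0, ket1, Prod.ext_iff]

lemma chi2_eq : chi2 = alphaC • cv2 := by
  funext ⟨a, b, c⟩
  fin_cases a <;> fin_cases b <;> fin_cases c <;>
    simp [chi2, cv2, alphaC, kron3, ket0, ket1, Prod.ext_iff]

lemma outer_smul {n : Type*} (a : ℂ) (v : n → ℂ) :
    outer (a • v) = (a * star a) • outer v := by
  ext i j
  simp only [outer, vecMulVec_apply, Pi.smul_apply, star_smul, Pi.star_apply,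
    Matrix.smul_apply, smul_eq_mul]
  ring

lemma alpha_mul_self : alphaC * star alphaC = 1/2 := by
  rw [alphaC, Complex.star_def, ← Complex.ofReal_inv, Complex.conj_ofReal,
    ← Complex.ofReal_mul, ← mul_inv, Real.mul_self_sqrt (by norm_num : (0:ℝ) ≤ 2)]
  norm_num

lemma rhoPrime_eq_SS : rhoPrime = (1/4 : ℂ) • (outer cv1 + outer cv2) := by
  rw [part1, chi1_eq, chi2_eq, outer_smul, outer_smul, alpha_mul_self]
  rw [smul_add]
  rw [smul_smul, smul_smul]
  norm_num

lemma measC_smul (P : Matrix (Fin 2) (Fin 2) ℂ) (c : ℂ)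
    (ρ : Matrix (Fin 2 × Fin 2 × Fin 2) (Fin 2 × Fin 2 × Fin 2) ℂ) :
    measC P (c • ρ) = c • measC P ρ := by
  simp [measC, Matrix.mul_smul, Matrix.smul_mul, smul_add]

theorem instrumental_state_has_nonzero_discord :
    rhoPrime = (1 / 2 : ℂ) • outer chi1 + (1 / 2 : ℂ) • outer chi2 ∧
    ∀ P : Matrix (Fin 2) (Fin 2) ℂ,
      P.IsHermitian → P * P = P → P.rank = 1 → measC P rhoPrime ≠ rhoPrime := by
  refine ⟨part1, ?_⟩
  intro P hH hP2 hrk hEq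
  rw [rhoPrime_eq_SS, measC_smul] at hEq
  have hSS : measC P (outer cv1 + outer cv2) = outer cv1 + outer cv2 :=
    smul_right_injective _ (by norm_num : (1/4 : ℂ) ≠ 0) hEq
  have e1 := congrFun (congrFun hSS ((0:Fin 2), (1:Fin 2), (1:Fin 2)))
    ((1:Fin 2), (1:Fin 2), (0:Fin 2))
  simp only [measC, embedC, Id2, Matrix.add_apply, Matrix.mul_apply,
    Matrix.kroneckerMap_apply, Matrix.one_apply, Matrix.sub_apply, outer, vecMulVec_apply,
    cv1, cv2, Pi.star_apply, Fintype.sum_prod_type, Fin.sum_univ_two, Prod.mk.injEq] at e1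
  norm_num at e1
  -- e1 : P 1 1 * Complex.I * P 0 0 + (1 - P 1 1) * Complex.I * (1 - P 0 0) = Complex.I
  have E1 : P 1 1 * P 0 0 + (1 - P 1 1) * (1 - P 0 0) = 1 := by
    apply mul_left_cancel₀ Complex.I_ne_zero
    linear_combination e1
  have c00 := congrFun (congrFun hP2 0) 0
  have c01 := congrFun (congrFun hP2 0) 1
  have c11 := congrFun (congrFun hP2 1) 1
  simp only [Matrix.mul_apply, Fin.sum_univ_two] at c00 c01 c11
  have hpre : star (P 0 0) = P 0 0 := hH.apply 0 0
  by_cases hq : P 0 1 = 0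
  · have hr0 : P 1 0 = 0 := by rw [← hH.apply 1 0, hq, star_zero]
    have hp2 : P 0 0 * P 0 0 = P 0 0 := by
      rw [hq] at c00; simpa using c00
    have hs2 : P 1 1 * P 1 1 = P 1 1 := by
      rw [hr0] at c11; simpa using c11
    have hp01 : P 0 0 = 0 ∨ P 0 0 = 1 := by
      rcases mul_eq_zero.mp (show P 0 0 * (P 0 0 - 1) = 0 by linear_combination hp2) with h | h
      · exact Or.inl h
      · exact Or.inr (by linear_combination h)
    have hs01 : P 1 1 = 0 ∨ P 1 1 = 1 := by
      rcases mul_eq_zero.mp (show P 1 1 * (P 1 1 - 1) = 0 by linear_combination hs2) with h | h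
      · exact Or.inl h
      · exact Or.inr (by linear_combination h)
    rcases hp01 with hp | hp <;> rcases hs01 with hs | hs
    · have hP0 : P = 0 := by
        ext i j
        fin_cases i <;> fin_cases j <;> simp [hp, hs, hq, hr0]
      rw [hP0, Matrix.rank_zero] at hrk
      norm_num at hrk
    · rw [hp, hs] at E1; norm_num at E1
    · rw [hp, hs] at E1; norm_num at E1
    · have hP1 : P = 1 := by
        ext i j
        fin_cases i <;> fin_cases j <;>
          simp [hp, hs, hq, hr0, Matrix.one_apply]
      rw [hP1, Matrix.rank_one] at hrk
      norm_num at hrk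
  · have hps : P 0 0 + P 1 1 = 1 := by
      have hfac : (P 0 0 + P 1 1 - 1) * P 0 1 = 0 := by linear_combination c01
      rcases mul_eq_zero.mp hfac with h | h
      · linear_combination h
      · exact absurd h hq
    have h1 : 2 * P 0 0 * (1 - P 0 0) = 1 := by
      linear_combination E1 + (1 - 2 * P 0 0) * hps
    have hw2 : (2 * P 0 0 - 1) * (2 * P 0 0 - 1) = -1 := by
      linear_combination (-2 : ℂ) * h1
    have hpim : (P 0 0).im = 0 := by
      have : (starRingEnd ℂ) (P 0 0) = P 0 0 := hpre
      exact Complex.conj_eq_iff_im.mp this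
    have hwim : (2 * P 0 0 - 1 : ℂ).im = 0 := by
      simp [Complex.sub_im, Complex.mul_im, hpim]
    have hre := congrArg Complex.re hw2
    rw [Complex.mul_re, hwim] at hre
    simp only [mul_zero, sub_zero, Complex.neg_re, Complex.one_re] at hre
    nlinarith [sq_nonneg (2 * P 0 0 - 1 : ℂ).re]

end
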